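/- Let A = ⊕_{i≥0} A_i be a positively graded commutative ring with A₀ = R, let Q be a finitely generated A-module, s ∈ R, and p ∈ Q an element such that the order ideal O_Q(p) satisfies O_Q(p) + sA₊ = A, where A₊ = ⊕_{i≥1} A_i. If moreover A/O_Q(p) is integral over R/(R ∩ O_Q(p)) and Q_s is free, then there exists p' ∈ Q with p' − p ∈ sA₊Q and p' unimodular in Q. -/

import Mathlib

open DirectSum

section GEval
variable {A : Type*} [CommRing A] (𝒜 : ℕ → AddSubgroup A) [GradedRing 𝒜] (c : A)

noncomputable def gEval : A →+* A :=
  (DirectSum.toSemiring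
    (fun i => ((AddMonoidHom.mulRight (c ^ i)).comp (𝒜 i).subtype))
    (by simp)
    (by intro i j x y
        simp only [AddMonoidHom.coe_comp, Function.comp_apply, AddSubgroup.coe_subtype,
          AddMonoidHom.coe_mulRight, SetLike.coe_gMul, pow_add]
        ring)).comp
    ((DirectSum.decomposeRingEquiv 𝒜 : A ≃+* ⨁ i, 𝒜 i) : A →+* ⨁ i, 𝒜 i)

lemma gEval_of_mem {i : ℕ} {a : A} (h : a ∈ 𝒜 i) : gEval 𝒜 c a = a * c ^ i := by
  unfold gEval
  simp only [RingHom.coe_comp, Function.comp_apply]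
  have : (((DirectSum.decomposeRingEquiv 𝒜 : A ≃+* ⨁ i, 𝒜 i) : A →+* ⨁ i, 𝒜 i) a)
      = DirectSum.of _ i ⟨a, h⟩ := DirectSum.decompose_of_mem 𝒜 h
  rw [this, DirectSum.toSemiring_of]
  rfl

lemma gEval_of_mem_zero {a : A} (h : a ∈ 𝒜 0) : gEval 𝒜 c a = a := by
  rw [gEval_of_mem 𝒜 c h, pow_zero, mul_one]

variable {Aplus : Ideal A}

lemma mem_Aplus_of_mem (hAp : Aplus = Ideal.span (⋃ i ∈ {i : ℕ | 0 < i}, ((𝒜 i : Set A)))) {i : ℕ} (hi : 0 < i) {a : A} (ha : a ∈ 𝒜 i) : a ∈ Aplus := by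
  rw [hAp]
  exact Ideal.subset_span (Set.mem_biUnion hi ha)

lemma sub_gEval_mem (hAp : Aplus = Ideal.span (⋃ i ∈ {i : ℕ | 0 < i}, ((𝒜 i : Set A)))) (a : A) : a - gEval 𝒜 c a ∈ Ideal.span {1 - c} * Aplus := by
  induction a using DirectSum.Decomposition.inductionOn 𝒜 with
  | zero => simp
  | @homogeneous i m =>
      rcases Nat.eq_zero_or_pos i with hi | hi
      · subst hi
        rw [gEval_of_mem_zero 𝒜 c m.2]
        simp
      · rw [gEval_of_mem 𝒜 c m.2]
        have hgeo : (m : A) - (m : A) * c ^ i = (1 - c) * ((∑ j ∈ Finset.range i, c ^ j) * m) := by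
          have h2 := geom_sum_mul c i
          linear_combination (m : A) * h2
        rw [hgeo]
        exact Ideal.mul_mem_mul (Ideal.mem_span_singleton_self _)
          (Ideal.mul_mem_left _ _ (mem_Aplus_of_mem 𝒜 hAp hi m.2))
  | add x y hx hy =>
      have : (x + y) - gEval 𝒜 c (x + y) = (x - gEval 𝒜 c x) + (y - gEval 𝒜 c y) := by
        rw [map_add]; ring
      rw [this]; exact add_mem hx hy

lemma gEval_sub_proj_mem (a : A) :
    gEval 𝒜 c a - GradedRing.projZeroRingHom 𝒜 a ∈ Ideal.span {c} := by
  induction a using DirectSum.Decomposition.inductionOn 𝒜 with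
  | zero => simp
  | @homogeneous i m =>
      rcases Nat.eq_zero_or_pos i with hi | hi
      · subst hi
        rw [gEval_of_mem_zero 𝒜 c m.2]
        rw [GradedRing.projZeroRingHom_apply, DirectSum.decompose_of_mem_same 𝒜 m.2]
        simp
      · rw [gEval_of_mem 𝒜 c m.2, GradedRing.projZeroRingHom_apply,
          DirectSum.decompose_of_mem_ne 𝒜 m.2 (Nat.pos_iff_ne_zero.mp hi)]
        rw [sub_zero]
        exact Ideal.mem_span_singleton.mpr
          (Dvd.dvd.mul_left (dvd_pow_self c (Nat.pos_iff_ne_zero.mp hi)) _)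
  | add x y hx hy =>
      have : gEval 𝒜 c (x + y) - GradedRing.projZeroRingHom 𝒜 (x + y)
          = (gEval 𝒜 c x - GradedRing.projZeroRingHom 𝒜 x)
            + (gEval 𝒜 c y - GradedRing.projZeroRingHom 𝒜 y) := by
        rw [map_add, map_add]; ring
      rw [this]; exact add_mem hx hy

lemma proj_eq_zero_of_mem_Aplus (hAp : Aplus = Ideal.span (⋃ i ∈ {i : ℕ | 0 < i}, ((𝒜 i : Set A)))) {a : A} (ha : a ∈ Aplus) :
    GradedRing.projZeroRingHom 𝒜 a = 0 := by
  have : Aplus ≤ RingHom.ker (GradedRing.projZeroRingHom 𝒜) := by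
    rw [hAp, Ideal.span_le]
    rintro x hx
    simp only [Set.mem_iUnion] at hx
    obtain ⟨i, hi, hxi⟩ := hx
    simp only [SetLike.mem_coe, RingHom.mem_ker]
    rw [GradedRing.projZeroRingHom_apply,
      DirectSum.decompose_of_mem_ne 𝒜 hxi (Nat.pos_iff_ne_zero.mp hi)]
  exact this ha

lemma proj_of_mem_zero {a : A} (h : a ∈ 𝒜 0) : GradedRing.projZeroRingHom 𝒜 a = a := by
  rw [GradedRing.projZeroRingHom_apply, DirectSum.decompose_of_mem_same 𝒜 h]

end GEval

section IntegralStep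
variable {A : Type*} [CommRing A] (𝒜 : ℕ → AddSubgroup A) [GradedRing 𝒜]

lemma s_pow_mem_zero {s : A} (hs : s ∈ 𝒜 0) (k : ℕ) : s ^ k ∈ 𝒜 0 := by
  have := SetLike.pow_mem_graded k hs
  simpa using this

lemma exists_w {s v : A} (hs : s ∈ 𝒜 0) (O : Ideal A)
    (hint : ((Ideal.Quotient.mk O).comp (SetLike.GradeZero.subring 𝒜).subtype).IsIntegral)
    (hsv : Ideal.Quotient.mk O (s * v) = 1) :
    ∃ w : A, w ∈ 𝒜 0 ∧ Ideal.Quotient.mk O (s * w) = 1 := by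
  classical
  set π := Ideal.Quotient.mk O with hπ
  set f := π.comp (SetLike.GradeZero.subring 𝒜).subtype with hf
  obtain ⟨P, hPmonic, hPev⟩ := hint (π v)
  set n := P.natDegree with hn
  -- the candidate
  refine ⟨-∑ i ∈ Finset.range n, (P.coeff i : A) * s ^ (n - 1 - i), ?_, ?_⟩
  · refine neg_mem (AddSubgroup.sum_mem _ fun i _ => ?_)
    have h1 : (P.coeff i : A) ∈ 𝒜 0 := (P.coeff i).2
    have h2 : s ^ (n - 1 - i) ∈ 𝒜 0 := s_pow_mem_zero 𝒜 hs _
    simpa using SetLike.mul_mem_graded h1 h2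
  · have hkey : ∀ i, i ≤ n → π s ^ n * π v ^ i = π s ^ (n - i) := by
      intro i hi
      have h1 : π s ^ n = π s ^ (n - i) * π s ^ i := by
        rw [← pow_add]; congr 1; omega
      have h2 : π s ^ i * π v ^ i = 1 := by
        rw [← mul_pow, ← map_mul, hsv, one_pow]
      calc π s ^ n * π v ^ i = π s ^ (n - i) * (π s ^ i * π v ^ i) := by rw [h1]; ring
        _ = π s ^ (n - i) := by rw [h2, mul_one]
    have hev2 : (0 : A ⧸ O) = ∑ i ∈ Finset.range (n + 1), f (P.coeff i) * π s ^ (n - i) := by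
      have h0 : π s ^ n * P.eval₂ f (π v) = 0 := by rw [hPev, mul_zero]
      rw [Polynomial.eval₂_eq_sum_range, Finset.mul_sum] at h0
      rw [← h0]
      refine Finset.sum_congr rfl fun i hi => ?_
      have hi' : i ≤ n := by simpa [Nat.lt_succ_iff] using hi
      rw [← hkey i hi']; ring
    rw [Finset.sum_range_succ] at hev2
    have hlead : f (P.coeff n) = 1 := by
      rw [show P.coeff n = 1 from hPmonic.coeff_natDegree, map_one]
    rw [hlead, Nat.sub_self, pow_zero, one_mul] at hev2
    have hsum : ∑ i ∈ Finset.range n, f (P.coeff i) * π s ^ (n - i) = -1 := by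
      linear_combination -hev2
    have hfin : π (s * (-∑ i ∈ Finset.range n, (P.coeff i : A) * s ^ (n - 1 - i)))
        = -∑ i ∈ Finset.range n, f (P.coeff i) * π s ^ (n - i) := by
      rw [map_mul, map_neg, map_sum, mul_neg, Finset.mul_sum]
      congr 1
      refine Finset.sum_congr rfl fun i hi => ?_
      have hi' : i < n := Finset.mem_range.mp hi
      have hc : π ((P.coeff i : A)) = f (P.coeff i) := rfl
      rw [map_mul, map_pow, hc]
      have : n - i = (n - 1 - i) + 1 := by omega
      rw [this, pow_succ]
      ring
    rw [hfin, hsum, neg_neg]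
end IntegralStep
section Main

set_option maxHeartbeats 2000000

/-- Lindel's lemma: let `A = ⊕_{i ≥ 0} 𝒜 i` be a positively graded ring with degree
zero part `R = 𝒜 0`, `Q` a finitely generated `A`-module, `s ∈ R` with `Q_s` free, and
`p ∈ Q` with order ideal `O` satisfying `O + sA₊ = A`.  If `A / O` is integral over
`R / (R ∩ O)`, then there is a unimodular `p'` in `Q` with `p' - p` in `sA₊Q`. -/
theorem stmt14 (A : Type*) [CommRing A] [IsNoetherianRing A]
    (𝒜 : ℕ → AddSubgroup A) [GradedRing 𝒜]
    (Q : Type*) [AddCommGroup Q] [Module A Q] (hQfin : Module.Finite A Q)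
    (s : A) (hs : s ∈ 𝒜 0)
    (hfree : Module.Free (Localization.Away s) (LocalizedModule (Submonoid.powers s) Q))
    (p : Q) (O Aplus : Ideal A)
    (hO : (O : Set A) = {x : A | ∃ φ : Q →ₗ[A] A, φ p = x})
    (hAplus : Aplus = Ideal.span (⋃ i ∈ {i : ℕ | 0 < i}, (𝒜 i : Set A)))
    (hcomax : O ⊔ Ideal.span {s} * Aplus = ⊤)
    (hintegral : ((Ideal.Quotient.mk O).comp
      (SetLike.GradeZero.subring 𝒜).subtype).IsIntegral) :
    ∃ p' : Q, p' - p ∈ (Ideal.span {s} * Aplus) • (⊤ : Submodule A Q) ∧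
      {x : A | ∃ φ : Q →ₗ[A] A, φ p' = x} = Set.univ := by
  classical
  haveI := hQfin
  haveI : Module.FinitePresentation A Q := Module.finitePresentation_of_finite A Q
  set I : Ideal A := Ideal.span {s} * Aplus with hI
  -- Step 1 : decompose 1
  have h1 : (1 : A) ∈ O ⊔ I := by rw [hcomax]; trivial
  obtain ⟨o, ho, t, ht, hot⟩ := Submodule.mem_sup.mp h1
  have hoO : o ∈ {x : A | ∃ φ : Q →ₗ[A] A, φ p = x} := by rw [← hO]; exact ho
  obtain ⟨φ₀, hφ₀⟩ := hoO
  obtain ⟨v, hvA, hsv⟩ := Ideal.mem_span_singleton_mul.mp ht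
  -- Step 2 : integrality gives w of degree 0
  have hπsv : Ideal.Quotient.mk O (s * v) = 1 := by
    have h2 : Ideal.Quotient.mk O o = 0 := Ideal.Quotient.eq_zero_iff_mem.mpr ho
    have h3 := congrArg (Ideal.Quotient.mk O) hot
    rw [map_add, map_one, h2, zero_add] at h3
    rw [hsv]; exact h3
  obtain ⟨w, hw0, hsw⟩ := exists_w 𝒜 hs O hintegral hπsv
  set y : A := 1 - s * w with hy
  have hyO : y ∈ O := by
    have : Ideal.Quotient.mk O y = 0 := by rw [hy, map_sub, map_one, hsw, sub_self]
    exact Ideal.Quotient.eq_zero_iff_mem.mp this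
  have hyφ : y ∈ {x : A | ∃ φ : Q →ₗ[A] A, φ p = x} := by rw [← hO]; exact hyO
  obtain ⟨φ₁, hφ₁⟩ := hyφ
  -- Localization set-up
  set S := Submonoid.powers s with hS
  set B := Localization.Away s with hB
  set alg : A →+* B := algebraMap A B with halg
  set Qs := LocalizedModule S Q with hQs
  set mkL : Q →ₗ[A] Qs := LocalizedModule.mkLinearMap S Q with hmkL
  haveI : Module.Finite B Qs := Module.Finite.of_isLocalizedModule S mkL
  haveI := hfree
  set b := Module.Free.chooseBasis B Qs with hb
  set ι := Module.Free.ChooseBasisIndex B Qs with hι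
  -- coordinates with common denominator
  have hxex : ∃ (x : ι → A) (k : ℕ), ∀ i, (b.repr (mkL p) i) * alg (s ^ k) = alg (x i) := by
    have hsurj : ∀ i : ι, ∃ (xa : A) (e : ℕ), (b.repr (mkL p) i) * alg (s ^ e) = alg xa := by
      intro i
      obtain ⟨⟨xa, σ⟩, hσ⟩ := IsLocalization.surj S (b.repr (mkL p) i)
      obtain ⟨e, he⟩ := (Submonoid.mem_powers_iff _ _).mp σ.2
      exact ⟨xa, e, by rw [he]; exact hσ⟩
    choose x0 e h using hsurj
    set k := Finset.univ.sup e with hk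
    refine ⟨fun i => s ^ (k - e i) * x0 i, k, fun i => ?_⟩
    have hle : e i ≤ k := Finset.le_sup (Finset.mem_univ i)
    have hpow : (s : A) ^ k = s ^ (k - e i) * s ^ (e i) := by
      rw [← pow_add]; congr 1; omega
    rw [hpow, map_mul, map_mul]
    linear_combination (alg (s ^ (k - e i))) * (h i)
  obtain ⟨x, k, hx⟩ := hxex
  -- basis preimages with common denominator
  have hqex : ∃ (qt : ι → Q) (l : ℕ), ∀ i, (s ^ l : A) • b i = mkL (qt i) := by
    have hsurj : ∀ i : ι, ∃ (q0 : Q) (e : ℕ), (s ^ e : A) • b i = mkL q0 := by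
      intro i
      obtain ⟨q0, σ, hσ⟩ : ∃ (m : Q) (σ : S), LocalizedModule.mk m σ = b i :=
        LocalizedModule.induction_on (fun m σ => ⟨m, σ, rfl⟩) (b i)
      obtain ⟨e, he⟩ := (Submonoid.mem_powers_iff _ _).mp σ.2
      refine ⟨q0, e, ?_⟩
      have h1 : (σ : A) • b i = mkL q0 := by
        rw [← hσ, LocalizedModule.smul'_mk]
        have h2 : ((σ : A) • q0) = σ • q0 := rfl
        rw [h2, LocalizedModule.mk_cancel]
        rfl
      rw [← h1, he]
    choose q0 e h using hsurj
    set l := Finset.univ.sup e with hl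
    refine ⟨fun i => (s ^ (l - e i)) • q0 i, l, fun i => ?_⟩
    have hle : e i ≤ l := Finset.le_sup (Finset.mem_univ i)
    have hpow : (s : A) ^ l = s ^ (l - e i) * s ^ (e i) := by
      rw [← pow_add]; congr 1; omega
    rw [hpow, ← smul_smul, h i, map_smul]
  obtain ⟨qt, l, hq⟩ := hqex
  -- relation extraction
  have hrel : ∀ φ : Q →ₗ[A] A, ∃ (lam : ι → A) (K : ℕ),
      s ^ K * φ p = ∑ i, lam i * x i := by
    intro φ
    set φB : Qs →ₗ[B] B :=
      ((IsLocalizedModule.map S mkL (Algebra.linearMap A B)) φ).extendScalarsOfIsLocalization S B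
      with hφBdef
    have hφBapp : ∀ q : Q, φB (mkL q) = alg (φ q) := by
      intro q
      rw [hφBdef]
      rw [LinearMap.extendScalarsOfIsLocalization_apply']
      rw [IsLocalizedModule.map_apply]
      rfl
    have key : alg (s ^ (k + l) * φ p) = alg (∑ i, x i * φ (qt i)) := by
      rw [map_mul, map_sum]
      calc alg (s ^ (k + l)) * alg (φ p)
          = alg (s ^ (k + l)) * φB (mkL p) := by rw [hφBapp]
        _ = alg (s ^ (k + l)) * φB (∑ i, (b.repr (mkL p) i) • b i) := by
              rw [Module.Basis.sum_repr b (mkL p)]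
        _ = ∑ i, alg (s ^ k) * alg (s ^ l) * ((b.repr (mkL p) i) * φB (b i)) := by
              rw [map_sum, Finset.mul_sum]
              refine Finset.sum_congr rfl fun i _ => ?_
              rw [map_smul, smul_eq_mul, pow_add, map_mul]
              all_goals ring
        _ = ∑ i, alg (x i * φ (qt i)) := by
              refine Finset.sum_congr rfl fun i _ => ?_
              rw [map_mul]
              have h2 : alg (s ^ l) * φB (b i) = alg (φ (qt i)) := by
                rw [← hφBapp (qt i), ← hq i]
                rw [← algebraMap_smul B ((s : A) ^ l) (b i), map_smul, smul_eq_mul]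
              calc alg (s ^ k) * alg (s ^ l) * ((b.repr (mkL p) i) * φB (b i))
                  = ((b.repr (mkL p) i) * alg (s ^ k)) * (alg (s ^ l) * φB (b i)) := by ring
                _ = alg (x i) * alg (φ (qt i)) := by rw [hx i, h2]
    obtain ⟨σ, hσ⟩ := IsLocalization.exists_of_eq (M := S) key
    obtain ⟨E₂, hE₂⟩ := (Submonoid.mem_powers_iff _ _).mp σ.2
    rw [← hE₂] at hσ
    rw [Finset.mul_sum] at hσ
    refine ⟨fun i => s ^ E₂ * φ (qt i), E₂ + (k + l), ?_⟩
    rw [pow_add]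
    calc s ^ E₂ * s ^ (k + l) * φ p = s ^ E₂ * (s ^ (k + l) * φ p) := by ring
      _ = ∑ i, s ^ E₂ * (x i * φ (qt i)) := hσ
      _ = ∑ i, (s ^ E₂ * φ (qt i)) * x i := Finset.sum_congr rfl fun i _ => by ring
  obtain ⟨lam, K₁, hlam⟩ := hrel φ₁
  rw [hφ₁] at hlam
  obtain ⟨μ, K₀, hμ⟩ := hrel φ₀
  -- the twisting endomorphism
  set M : ℕ := k + l + 1 with hM
  set c : A := 1 - (s * w) ^ M with hc
  have h1c : (1 : A) - c = (s * w) ^ M := by rw [hc]; ring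
  have hu : ∀ i : ι, ∃ u, u ∈ Aplus ∧ (s * w) ^ M * u = x i - gEval 𝒜 c (x i) := by
    intro i
    have := sub_gEval_mem 𝒜 c hAplus (x i)
    rw [h1c] at this
    exact Ideal.mem_span_singleton_mul.mp this
  choose u huA huc using hu
  -- the correction and the new element
  set z₀ : Q := ∑ i, (s * (w ^ M * u i)) • qt i with hz₀
  set p' : Q := p - z₀ with hp'
  have hz₀I : z₀ ∈ I • (⊤ : Submodule A Q) := by
    refine Submodule.sum_mem _ fun i _ => Submodule.smul_mem_smul ?_ trivial
    exact Ideal.mem_span_singleton_mul.mpr ⟨w ^ M * u i, Aplus.mul_mem_left _ (huA i), rfl⟩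
  -- coordinates of p'
  have hz : mkL z₀ = ∑ j, alg (s ^ (l + 1) * (w ^ M * u j)) • b j := by
    rw [hz₀, map_sum]
    refine Finset.sum_congr rfl fun j _ => ?_
    rw [map_smul, ← hq j, smul_smul, algebraMap_smul]
    congr 1
    ring
  have hzrepr : ∀ i, b.repr (mkL z₀) i = alg (s ^ (l + 1) * (w ^ M * u i)) := by
    intro i
    rw [hz, map_sum]
    rw [Finsupp.finset_sum_apply]
    rw [Finset.sum_eq_single i]
    · rw [map_smul, Module.Basis.repr_self, Finsupp.smul_apply, Finsupp.single_eq_same, smul_eq_mul,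
        mul_one]
    · intro j _ hji
      rw [map_smul, Module.Basis.repr_self, Finsupp.smul_apply, Finsupp.single_apply,
        if_neg hji, smul_eq_mul, mul_zero]
    · intro hni
      exact absurd (Finset.mem_univ i) hni
  have hcoord : ∀ i, alg (s ^ k) * (b.repr (mkL p') i) = alg (gEval 𝒜 c (x i)) := by
    intro i
    have hsub : b.repr (mkL p') i
        = b.repr (mkL p) i - alg (s ^ (l + 1) * (w ^ M * u i)) := by
      rw [hp', map_sub, map_sub, Finsupp.sub_apply, hzrepr i]
    rw [hsub, mul_sub]
    have h1 : alg (s ^ k) * (b.repr (mkL p) i) = alg (x i) := by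
      rw [mul_comm]; exact hx i
    rw [h1, ← map_mul, ← map_sub]
    congr 1
    have h2 := huc i
    rw [hM] at h2 ⊢
    linear_combination -h2
  -- lifted dual functionals
  have hdual : ∃ (Φ : ι → (Q →ₗ[A] A)) (K₂ : ℕ),
      ∀ i, Φ i p' = s ^ K₂ * gEval 𝒜 c (x i) := by
    have hlift : ∀ i : ι, ∃ (ψ : Q →ₗ[A] A) (e : ℕ),
        ∀ q : Q, alg (ψ q) = alg (s ^ e) * (b.repr (mkL q) i) := by
      intro i
      obtain ⟨ψ, σ, hψ⟩ := Module.FinitePresentation.exists_lift_of_isLocalizedModule S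
        (Algebra.linearMap A B) (((b.coord i).restrictScalars A) ∘ₗ mkL)
      obtain ⟨e, he⟩ := (Submonoid.mem_powers_iff _ _).mp σ.2
      refine ⟨ψ, e, fun q => ?_⟩
      have h1 := LinearMap.congr_fun hψ q
      simp only [LinearMap.coe_comp, Function.comp_apply, Algebra.linearMap_apply,
        LinearMap.smul_apply, LinearMap.coe_restrictScalars, Module.Basis.coord_apply] at h1
      rw [h1, Submonoid.smul_def, Algebra.smul_def, he]
    choose ψ e hψ using hlift
    set E := Finset.univ.sup e with hE
    have hψE : ∀ i, ∀ q : Q, alg ((s ^ (E - e i) • ψ i) q)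
        = alg (s ^ E) * (b.repr (mkL q) i) := by
      intro i q
      have hle : e i ≤ E := Finset.le_sup (Finset.mem_univ i)
      have hEe : (s : A) ^ (E - e i) * s ^ (e i) = s ^ E := by
        rw [← pow_add]; congr 1; omega
      rw [LinearMap.smul_apply, smul_eq_mul, map_mul, hψ i q, ← mul_assoc, ← map_mul, hEe]
    -- evaluate at p' and clear denominators
    have hev : ∀ i : ι, ∃ ρ : ℕ, s ^ ρ * (s ^ k * ((s ^ (E - e i) • ψ i) p'))
        = s ^ ρ * (s ^ E * gEval 𝒜 c (x i)) := by
      intro i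
      have key : alg (s ^ k * ((s ^ (E - e i) • ψ i) p'))
          = alg (s ^ E * gEval 𝒜 c (x i)) := by
        rw [map_mul, map_mul, hψE i p', ← mul_assoc, mul_comm (alg (s ^ k)) (alg (s ^ E)),
          mul_assoc, hcoord i]
      obtain ⟨σ, hσ⟩ := IsLocalization.exists_of_eq (M := S) key
      obtain ⟨ρ, hρ⟩ := (Submonoid.mem_powers_iff _ _).mp σ.2
      exact ⟨ρ, by rw [hρ]; exact hσ⟩
    choose ρ hρ using hev
    set P := Finset.univ.sup ρ with hP
    refine ⟨fun i => (s ^ (P - ρ i + (ρ i + k))) • (s ^ (E - e i) • ψ i), P + E, fun i => ?_⟩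
    have hle : ρ i ≤ P := Finset.le_sup (Finset.mem_univ i)
    rw [LinearMap.smul_apply, smul_eq_mul]
    rw [show P - ρ i + (ρ i + k) = (P - ρ i) + ρ i + k by omega,
      show P + E = (P - ρ i) + ρ i + E by omega]
    rw [pow_add, pow_add, pow_add, pow_add]
    linear_combination (s ^ (P - ρ i)) * hρ i
  obtain ⟨Φ, K₂, hΦ⟩ := hdual
  -- (A1) : y-relation transported
  have hy0 : y ∈ 𝒜 0 := by
    refine sub_mem (SetLike.one_mem_graded 𝒜) ?_
    simpa using SetLike.mul_mem_graded hs hw0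
  have hA1 : ∃ Φ₁ : Q →ₗ[A] A, Φ₁ p' = s ^ (K₁ + K₂) * y := by
    have hev := congrArg (gEval 𝒜 c) hlam
    rw [map_mul, map_sum] at hev
    have hevy : gEval 𝒜 c (s ^ K₁) * gEval 𝒜 c y = s ^ K₁ * y := by
      rw [gEval_of_mem_zero 𝒜 c (s_pow_mem_zero 𝒜 hs K₁), gEval_of_mem_zero 𝒜 c hy0]
    rw [hevy] at hev
    refine ⟨∑ i, (gEval 𝒜 c (lam i)) • Φ i, ?_⟩
    rw [LinearMap.sum_apply]
    calc ∑ i, ((gEval 𝒜 c (lam i)) • Φ i) p'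
        = ∑ i, gEval 𝒜 c (lam i) * (s ^ K₂ * gEval 𝒜 c (x i)) := by
          refine Finset.sum_congr rfl fun i _ => ?_
          rw [LinearMap.smul_apply, smul_eq_mul, hΦ i]
      _ = s ^ K₂ * ∑ i, gEval 𝒜 c (lam i * x i) := by
          rw [Finset.mul_sum]
          refine Finset.sum_congr rfl fun i _ => ?_
          rw [map_mul]; ring
      _ = s ^ K₂ * (s ^ K₁ * y) := by rw [← hev]
      _ = s ^ (K₁ + K₂) * y := by rw [pow_add]; ring
  obtain ⟨Φ₁, hΦ₁⟩ := hA1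
  -- (A2) : a power of s is a value at p'
  set N : ℕ := K₀ + K₁ + 2 * K₂ with hN
  have hA2 : ∃ Φ₂ : Q →ₗ[A] A, Φ₂ p' = s ^ N := by
    set π₀ : A →+* A := GradedRing.projZeroRingHom 𝒜 with hπ₀
    have hproj := congrArg π₀ hμ
    rw [map_mul, map_sum] at hproj
    have hπs : π₀ (s ^ K₀) = s ^ K₀ := by
      rw [map_pow, hπ₀, proj_of_mem_zero 𝒜 hs]
    have hπo : π₀ (φ₀ p) = 1 := by
      rw [hφ₀, show o = 1 - t by linear_combination hot, map_sub, map_one, hπ₀,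
        proj_eq_zero_of_mem_Aplus 𝒜 hAplus (Ideal.mul_le_right ht), sub_zero]
    rw [hπs, hπo, mul_one] at hproj
    have hproj' : s ^ K₀ = ∑ i, π₀ (μ i) * π₀ (x i) := by
      rw [hproj]
      exact Finset.sum_congr rfl fun i _ => by rw [map_mul]
    have hgc : ∀ i : ι, ∃ g : A, g * c = gEval 𝒜 c (x i) - π₀ (x i) := by
      intro i
      exact Ideal.mem_span_singleton'.mp (gEval_sub_proj_mem 𝒜 c (x i))
    choose g hg using hgc
    set G : A := ∑ j ∈ Finset.range M, (s * w) ^ j with hG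
    have hcyG : c = y * G := by
      have := geom_sum_mul (s * w) M
      rw [hc, hy, hG]
      linear_combination this
    refine ⟨(∑ i, (s ^ (K₁ + K₂) * π₀ (μ i)) • Φ i)
      - ((∑ i, π₀ (μ i) * g i) * G * s ^ K₂) • Φ₁, ?_⟩
    rw [LinearMap.sub_apply, LinearMap.sum_apply, LinearMap.smul_apply, smul_eq_mul, hΦ₁]
    have hterm : ∀ i : ι, ((s ^ (K₁ + K₂) * π₀ (μ i)) • Φ i) p'
        = (s ^ (K₁ + K₂) * s ^ K₂) * (π₀ (μ i) * π₀ (x i))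
          + (π₀ (μ i) * g i) * (G * s ^ K₂ * (s ^ (K₁ + K₂) * y)) := by
      intro i
      rw [LinearMap.smul_apply, smul_eq_mul, hΦ i]
      have h2 : gEval 𝒜 c (x i) = π₀ (x i) + g i * (y * G) := by
        rw [← hcyG]; linear_combination -hg i
      rw [h2]; ring
    rw [Finset.sum_congr rfl fun i _ => hterm i, Finset.sum_add_distrib,
      ← Finset.mul_sum, ← Finset.sum_mul, ← hproj']
    rw [hN, show K₀ + K₁ + 2 * K₂ = (K₁ + K₂) + K₂ + K₀ by ring, pow_add, pow_add]
    ring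
  obtain ⟨Φ₂, hΦ₂⟩ := hA2
  -- (A3) : φ₀ at p'
  set v'' : A := v + ∑ i, w ^ M * u i * φ₀ (qt i) with hv''
  have hv''A : v'' ∈ Aplus := by
    refine add_mem hvA (Submodule.sum_mem _ fun i _ => ?_)
    exact Ideal.mul_mem_right _ _ (Ideal.mul_mem_left _ _ (huA i))
  have hA3 : φ₀ p' = 1 - s * v'' := by
    rw [hp', map_sub, hφ₀, hz₀, map_sum]
    have : ∀ i, φ₀ ((s * (w ^ M * u i)) • qt i) = s * (w ^ M * u i * φ₀ (qt i)) := by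
      intro i; rw [map_smul, smul_eq_mul]; ring
    rw [Finset.sum_congr rfl fun i _ => this i, ← Finset.mul_sum, hv'']
    have hto : o = 1 - t := by linear_combination hot
    rw [hto, ← hsv]; ring
  -- final assembly
  set Γ : A := ∑ j ∈ Finset.range N, (s * v'') ^ j with hΓ
  set φstar : Q →ₗ[A] A := Γ • φ₀ + (v'' ^ N) • Φ₂ with hφstar
  have hφstar1 : φstar p' = 1 := by
    rw [hφstar]
    simp only [LinearMap.add_apply, LinearMap.smul_apply, smul_eq_mul]
    rw [hA3, hΦ₂]
    have hgeom := geom_sum_mul (s * v'') N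
    have : v'' ^ N * s ^ N = (s * v'') ^ N := by rw [mul_pow]; ring
    rw [this]
    linear_combination -hgeom
  refine ⟨p', ?_, ?_⟩
  · rw [hp']
    have : p - z₀ - p = -z₀ := by abel
    rw [this]
    exact neg_mem hz₀I
  · apply Set.eq_univ_iff_forall.mpr
    intro a
    refine ⟨a • φstar, ?_⟩
    rw [LinearMap.smul_apply, hφstar1, smul_eq_mul, mul_one]

end Main
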